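/- Let q be a prime power, F a finite field with q² elements, and δ a generator of F^×. Let i, j ∈ ZMod (q²-1) with i ≢ j (mod q-1), and let l(i,j) = i - x_{i,j}·(q-1) ∈ ZMod (q²-1). Then δ^{l(i,j)} · (δ^i + δ^j)^q = (δ^i + δ^j) · (δ^i)^q in F. -/

import Mathlib

/-- The canonical reduction ring homomorphism `ZMod (q²-1) → ZMod (q-1)`,
which exists since `(q-1) ∣ (q²-1)`. -/
def red (q : ℕ) : ZMod (q ^ 2 - 1) →+* ZMod (q - 1) :=
  ZMod.castHom (by simpa using Nat.sub_dvd_pow_sub_pow q 1 2) (ZMod (q - 1))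

theorem stmt5 (q : ℕ) (hq : IsPrimePow q) (F : Type*) [Field F] [Fintype F]
    (hF : Fintype.card F = q ^ 2) (δ : Fˣ) (hδ : Subgroup.zpowers δ = ⊤)
    (i j : ZMod (q ^ 2 - 1)) (hij : red q i ≠ red q j)
    (x : ZMod (q ^ 2 - 1))
    (hx : ((δ ^ x.val : Fˣ) : F) = 1 + ((δ ^ (j - i).val : Fˣ) : F))
    (y l : ZMod (q ^ 2 - 1)) (hy : y = x + i - j)
    (hl : l = i - x * ((q - 1 : ℕ) : ZMod (q ^ 2 - 1))) :
    ((δ ^ l.val : Fˣ) : F) * (((δ ^ i.val : Fˣ) : F) + ((δ ^ j.val : Fˣ) : F)) ^ q =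
      (((δ ^ i.val : Fˣ) : F) + ((δ ^ j.val : Fˣ) : F)) * ((δ ^ i.val : Fˣ) : F) ^ q := by
  have hq2 : 2 ≤ q := hq.two_le
  have hNpos : 0 < q ^ 2 - 1 := by nlinarith [Nat.sub_add_cancel (show 1 ≤ q ^ 2 by nlinarith)]
  haveI : NeZero (q ^ 2 - 1) := ⟨hNpos.ne'⟩
  have horder : orderOf δ = q ^ 2 - 1 := by
    rw [orderOf_eq_card_of_forall_mem_zpowers (fun x => hδ ▸ Subgroup.mem_top x),
      Nat.card_units, Nat.card_eq_fintype_card, hF]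
  have hkey : ∀ n : ℕ, δ ^ n = δ ^ ((n : ZMod (q ^ 2 - 1)).val) := by
    intro n
    rw [ZMod.val_natCast, ← horder, pow_mod_orderOf]
  have hcast : ∀ a : ZMod (q ^ 2 - 1), ((a.val : ℕ) : ZMod (q ^ 2 - 1)) = a := by
    intro a; simp [ZMod.natCast_val, ZMod.cast_id]
  -- δ^i + δ^j = δ^(i.val + x.val)
  have hsum : ((δ ^ i.val : Fˣ) : F) + ((δ ^ j.val : Fˣ) : F)
      = ((δ ^ (i.val + x.val) : Fˣ) : F) := by
    have h1 : ((δ ^ (i.val + x.val) : Fˣ) : F)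
        = ((δ ^ i.val : Fˣ) : F) * ((δ ^ x.val : Fˣ) : F) := by
      rw [pow_add]; push_cast; ring
    have h2 : δ ^ j.val = δ ^ i.val * δ ^ (j - i).val := by
      rw [← pow_add, hkey (i.val + (j - i).val), hkey j.val]
      congr 1
      push_cast [hcast]
      ring_nf
    have h2' := congrArg (Units.val (α := F)) h2
    push_cast at h2'
    rw [h1, hx, mul_add, mul_one]
    push_cast
    rw [h2']
  rw [hsum]
  -- now everything is powers of δ
  have hL : ((δ ^ l.val : Fˣ) : F) * (((δ ^ (i.val + x.val) : Fˣ) : F)) ^ q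
      = ((δ ^ (l.val + (i.val + x.val) * q) : Fˣ) : F) := by
    conv_rhs => rw [pow_add, pow_mul]
    push_cast; ring
  have hR : (((δ ^ (i.val + x.val) : Fˣ) : F)) * (((δ ^ i.val : Fˣ) : F)) ^ q
      = ((δ ^ ((i.val + x.val) + i.val * q) : Fˣ) : F) := by
    conv_rhs => rw [pow_add, pow_mul]
    push_cast; ring
  rw [hL, hR]
  have hexp : δ ^ (l.val + (i.val + x.val) * q) = δ ^ ((i.val + x.val) + i.val * q) := by
    rw [hkey (l.val + (i.val + x.val) * q), hkey ((i.val + x.val) + i.val * q)]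
    congr 1
    have hq1 : ((q - 1 : ℕ) : ZMod (q ^ 2 - 1)) = (q : ZMod (q ^ 2 - 1)) - 1 := by
      push_cast [Nat.cast_sub (by omega : 1 ≤ q)]; ring
    push_cast [hcast, hl, hq1]
    ring
  rw [hexp]
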